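/- arXiv:2201.11360 — 2 statements merged into one kernel-verified Lean document; each statement's English description precedes it below -/
import Mathlib

section
/- Let S₂ := (1/2)(|00⟩⟨00| − |01⟩⟨01| + |10⟩⟨10| + |11⟩⟨11|) acting on ℂ² ⊗ ℂ², and for q ∈ (0,1] let X₂ := q|φ₂⁺⟩⟨φ₂⁺| + (1−q)|01⟩⟨01|. Then Tr(S₂σ) ≥ 0 for every σ ∈ 𝔄𝔉₂, and Tr(S₂X₂) = q − 1/2; in particular, for q < 1/2 one has Tr(S₂X₂) < 0 and hence X₂ ∉ 𝔄𝔉₂. -/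
open Matrix Kronecker Complex
open scoped ComplexOrder

/-- The canonical maximally entangled vector `|ψ⁺⟩ = (1/√d) ∑ᵢ |ii⟩` on `ℂ^d ⊗ ℂ^d`. -/
noncomputable def psiPlus (d : ℕ) : (Fin d × Fin d) → ℂ :=
  fun p => if p.1 = p.2 then ((Real.sqrt d)⁻¹ : ℝ) else 0

/-- The fully entangled fraction: the supremum over `d × d` unitaries `V` of
`⟨ψ⁺| (I ⊗ V)† ρ (I ⊗ V) |ψ⁺⟩`. -/
noncomputable def fef (d : ℕ) (ρ : Matrix (Fin d × Fin d) (Fin d × Fin d) ℂ) : ℝ :=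
  ⨆ V : Matrix.unitaryGroup (Fin d) ℂ,
    (star (psiPlus d) ⬝ᵥ
      ((((1 : Matrix (Fin d) (Fin d) ℂ) ⊗ₖ (V : Matrix (Fin d) (Fin d) ℂ))ᴴ * ρ *
        ((1 : Matrix (Fin d) (Fin d) ℂ) ⊗ₖ (V : Matrix (Fin d) (Fin d) ℂ))) *ᵥ psiPlus d)).re

/-- A density matrix: positive semidefinite with unit trace. -/
def IsDensityMatrix {n : Type*} [Fintype n] (ρ : Matrix n n ℂ) : Prop :=
  ρ.PosSemidef ∧ ρ.trace = 1

/-- `ρ` has absolute fully entangled fraction: `F(UρU†) ≤ 1/d` for every unitary `U`. -/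
def AbsFEF (d : ℕ) (ρ : Matrix (Fin d × Fin d) (Fin d × Fin d) ℂ) : Prop :=
  ∀ U ∈ Matrix.unitaryGroup (Fin d × Fin d) ℂ, fef d (U * ρ * Uᴴ) ≤ 1 / d

/-- Basis vector `|ij⟩` of `ℂ^d ⊗ ℂ^d`. -/
def ket (d : ℕ) (i j : Fin d) : (Fin d × Fin d) → ℂ :=
  fun p => if p = (i, j) then 1 else 0

/-- Rank-one projector `|v⟩⟨v|`. -/
def proj {n : Type*} (v : n → ℂ) : Matrix n n ℂ :=
  Matrix.vecMulVec v (star v)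

/-- The state `X₂ = q|φ₂⁺⟩⟨φ₂⁺| + (1−q)|01⟩⟨01|`. -/
noncomputable def X₂ (q : ℝ) : Matrix (Fin 2 × Fin 2) (Fin 2 × Fin 2) ℂ :=
  (q : ℂ) • proj (psiPlus 2) + ((1 - q : ℝ) : ℂ) • proj (ket 2 0 1)

/-- The witness `S₂ = (1/2)(|00⟩⟨00| − |01⟩⟨01| + |10⟩⟨10| + |11⟩⟨11|)`. -/
noncomputable def S₂ : Matrix (Fin 2 × Fin 2) (Fin 2 × Fin 2) ℂ :=
  (1/2 : ℂ) • (proj (ket 2 0 0) - proj (ket 2 0 1) + proj (ket 2 1 0) + proj (ket 2 1 1))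

lemma cInv_nonneg : 0 ≤ (Real.sqrt 2)⁻¹ := by positivity

lemma cInv_sq : ((Real.sqrt 2)⁻¹ : ℝ) * (Real.sqrt 2)⁻¹ = 1/2 := by
  rw [← mul_inv, Real.mul_self_sqrt (by norm_num)]; norm_num

lemma cInv_le_one : ((Real.sqrt 2)⁻¹ : ℝ) ≤ 1 := by
  rw [inv_le_one_iff₀]; right
  nlinarith [Real.sq_sqrt (by norm_num : (2:ℝ) ≥ 0), Real.sqrt_nonneg 2]

lemma psiPlus2_apply (p : Fin 2 × Fin 2) :
    psiPlus 2 p = if p.1 = p.2 then (((Real.sqrt 2)⁻¹:ℝ) : ℂ) else 0 := by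
  simp [psiPlus]

-- quadratic form of a projector
lemma proj_mulVec {n : Type*} [Fintype n] (v x : n → ℂ) :
    proj v *ᵥ x = (star v ⬝ᵥ x) • v := by
  ext i
  simp [proj, vecMulVec_apply, mulVec, dotProduct, Finset.sum_mul, Finset.mul_sum]
  apply Finset.sum_congr rfl
  intro j _
  ring

lemma dot_proj {n : Type*} [Fintype n] (v x : n → ℂ) :
    star x ⬝ᵥ (proj v *ᵥ x) = ((Complex.normSq (star v ⬝ᵥ x) : ℝ) : ℂ) := by
  rw [proj_mulVec, dotProduct_smul, Complex.normSq_eq_conj_mul_self]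
  have : star x ⬝ᵥ v = (starRingEnd ℂ) (star v ⬝ᵥ x) := by
    simp [dotProduct, map_sum, mul_comm]
  rw [smul_eq_mul, this]
  ring

lemma proj_posSemidef {n : Type*} [Fintype n] (v : n → ℂ) : (proj v).PosSemidef := by
  rw [posSemidef_iff_dotProduct_mulVec]
  constructor
  · ext i j
    simp [proj, conjTranspose_apply, vecMulVec_apply, mul_comm]
  · intro x
    rw [dot_proj]
    exact_mod_cast Complex.real_le_real.mpr (Complex.normSq_nonneg _)

lemma smul_psd {n : Type*} [Fintype n] (r : ℝ) (hr : 0 ≤ r) {M : Matrix n n ℂ}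
    (hM : M.PosSemidef) : ((r : ℂ) • M).PosSemidef := by
  rw [posSemidef_iff_dotProduct_mulVec]
  constructor
  · unfold Matrix.IsHermitian
    rw [conjTranspose_smul, hM.1]
    simp
  · intro x
    rw [smul_mulVec, dotProduct_smul, smul_eq_mul]
    have h0 : (0:ℂ) ≤ (r:ℂ) := Complex.real_le_real.mpr hr
    exact mul_nonneg h0 (hM.dotProduct_mulVec_nonneg x)
lemma ofReal_cInv_sq : (((Real.sqrt 2)⁻¹:ℝ):ℂ) * (((Real.sqrt 2)⁻¹:ℝ):ℂ) = 1/2 := by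
  rw [← Complex.ofReal_mul, cInv_sq]; norm_num

lemma trace_S₂_mul (σ : Matrix (Fin 2 × Fin 2) (Fin 2 × Fin 2) ℂ) :
    (S₂ * σ).trace = (1/2) * σ.trace - σ (0,1) (0,1) := by
  simp [Matrix.trace, Matrix.mul_apply, S₂, proj, ket, vecMulVec_apply,
    Fintype.sum_prod_type, Fin.sum_univ_two, Matrix.diag, Prod.ext_iff]
  ring

lemma trace_X₂ (q : ℝ) : (X₂ q).trace = 1 := by
  simp [Matrix.trace, X₂, proj, ket, vecMulVec_apply, psiPlus2_apply,
    Fintype.sum_prod_type, Fin.sum_univ_two, Matrix.diag, Prod.ext_iff,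
    Complex.conj_ofReal]
  have h : ((Real.sqrt 2 : ℝ):ℂ)⁻¹ * ((Real.sqrt 2:ℝ):ℂ)⁻¹ = 1/2 := by
    rw [← Complex.ofReal_inv, ← Complex.ofReal_mul, cInv_sq]; norm_num
  rw [h]; push_cast; ring

lemma X₂_apply_e2 (q : ℝ) : X₂ q (0,1) (0,1) = ((1 - q : ℝ):ℂ) := by
  simp [X₂, proj, ket, vecMulVec_apply, psiPlus2_apply]
lemma c_sq : ((Real.sqrt 2 : ℝ):ℂ)⁻¹ * ((Real.sqrt 2:ℝ):ℂ)⁻¹ = 1/2 := by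
  rw [← Complex.ofReal_inv, ← Complex.ofReal_mul, cInv_sq]; norm_num

noncomputable def uWit : Matrix (Fin 2 × Fin 2) (Fin 2 × Fin 2) ℂ :=
  fun p q =>
    if p = ((0:Fin 2),(0:Fin 2)) then
      (if q = ((0:Fin 2),(0:Fin 2)) ∨ q = ((0:Fin 2),(1:Fin 2)) then (((Real.sqrt 2)⁻¹:ℝ):ℂ) else 0)
    else if p = ((0:Fin 2),(1:Fin 2)) then (if q = ((1:Fin 2),(0:Fin 2)) then 1 else 0)
    else if p = ((1:Fin 2),(0:Fin 2)) then (if q = ((1:Fin 2),(1:Fin 2)) then 1 else 0)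
    else (if q = ((0:Fin 2),(0:Fin 2)) then -(((Real.sqrt 2)⁻¹:ℝ):ℂ)
          else if q = ((0:Fin 2),(1:Fin 2)) then (((Real.sqrt 2)⁻¹:ℝ):ℂ) else 0)

lemma uWit_mem : uWit ∈ Matrix.unitaryGroup (Fin 2 × Fin 2) ℂ := by
  rw [Matrix.mem_unitaryGroup_iff']
  ext p q
  fin_cases p <;> fin_cases q <;>
    simp [Matrix.mul_apply, Matrix.star_apply, uWit, Fintype.sum_prod_type,
      Fin.sum_univ_two, Matrix.one_apply, Complex.conj_ofReal, Prod.ext_iff] <;>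
    norm_num [c_sq] <;>
    rw [← Complex.ofReal_inv, ← Complex.ofReal_mul, cInv_sq] <;> norm_num

lemma uWit_pull : uWitᴴ *ᵥ psiPlus 2 = ket 2 0 1 := by
  ext p
  fin_cases p <;>
    simp [Matrix.mulVec, dotProduct, Matrix.conjTranspose_apply, uWit, psiPlus2_apply,
      ket, Fintype.sum_prod_type, Fin.sum_univ_two, Complex.conj_ofReal, Prod.ext_iff] <;>
    norm_num [c_sq] <;>
    rw [← Complex.ofReal_inv, ← Complex.ofReal_mul, cInv_sq] <;> norm_num
lemma sandwich (A ρ : Matrix (Fin 2 × Fin 2) (Fin 2 × Fin 2) ℂ) (ψ : (Fin 2 × Fin 2) → ℂ) :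
    star ψ ⬝ᵥ ((Aᴴ * ρ * A) *ᵥ ψ) = star (A *ᵥ ψ) ⬝ᵥ (ρ *ᵥ (A *ᵥ ψ)) := by
  rw [show (Aᴴ * ρ * A) *ᵥ ψ = Aᴴ *ᵥ (ρ *ᵥ (A *ᵥ ψ)) by
    rw [mulVec_mulVec, mulVec_mulVec, Matrix.mul_assoc]]
  rw [dotProduct_mulVec, ← star_mulVec]

lemma fef_term_bdd (ρ : Matrix (Fin 2 × Fin 2) (Fin 2 × Fin 2) ℂ) :
    BddAbove (Set.range fun V : Matrix.unitaryGroup (Fin 2) ℂ =>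
      (star (psiPlus 2) ⬝ᵥ
        ((((1 : Matrix (Fin 2) (Fin 2) ℂ) ⊗ₖ (V : Matrix (Fin 2) (Fin 2) ℂ))ᴴ * ρ *
          ((1 : Matrix (Fin 2) (Fin 2) ℂ) ⊗ₖ (V : Matrix (Fin 2) (Fin 2) ℂ))) *ᵥ psiPlus 2)).re) := by
  refine ⟨∑ p : Fin 2 × Fin 2, ∑ q : Fin 2 × Fin 2, 16 * ‖ρ p q‖, ?_⟩
  rintro _ ⟨V, rfl⟩
  simp only [sandwich]
  set A := (1 : Matrix (Fin 2) (Fin 2) ℂ) ⊗ₖ (V : Matrix (Fin 2) (Fin 2) ℂ) with hA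
  set w := A *ᵥ psiPlus 2 with hw
  have hwb : ∀ p, ‖w p‖ ≤ 4 := by
    intro p
    calc ‖w p‖ ≤ ∑ q : Fin 2 × Fin 2, ‖A p q * psiPlus 2 q‖ := by
          rw [hw]; simp only [Matrix.mulVec, dotProduct]; exact norm_sum_le _ _
      _ ≤ ∑ _q : Fin 2 × Fin 2, 1 := by
          apply Finset.sum_le_sum
          intro q _
          rw [norm_mul]
          have h1 : ‖A p q‖ ≤ 1 := by
            rw [hA, kroneckerMap_apply, norm_mul]
            have ha : ‖(1 : Matrix (Fin 2) (Fin 2) ℂ) p.1 q.1‖ ≤ 1 := by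
              by_cases h : p.1 = q.1 <;> simp [Matrix.one_apply, h]
            have hb : ‖(V : Matrix (Fin 2) (Fin 2) ℂ) p.2 q.2‖ ≤ 1 := by
              simpa using entry_norm_bound_of_unitary V.2 p.2 q.2
            calc ‖_‖ * ‖_‖ ≤ 1 * 1 :=
                  mul_le_mul ha hb (norm_nonneg _) (by norm_num)
              _ = 1 := by norm_num
          have h2 : ‖psiPlus 2 q‖ ≤ 1 := by
            rw [psiPlus2_apply]
            by_cases h : q.1 = q.2 <;>
              simp [h, Complex.norm_real, _root_.abs_of_nonneg (Real.sqrt_nonneg 2),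
                cInv_le_one]
          calc ‖A p q‖ * ‖psiPlus 2 q‖ ≤ 1 * 1 :=
                mul_le_mul h1 h2 (norm_nonneg _) (by norm_num)
            _ = 1 := by norm_num
      _ ≤ 4 := by simp
  calc (star w ⬝ᵥ (ρ *ᵥ w)).re ≤ ‖star w ⬝ᵥ (ρ *ᵥ w)‖ := Complex.re_le_norm _
    _ ≤ ∑ p : Fin 2 × Fin 2, ‖star w p * (ρ *ᵥ w) p‖ := by
        simp only [dotProduct]; exact norm_sum_le _ _
    _ ≤ ∑ p : Fin 2 × Fin 2, ∑ q : Fin 2 × Fin 2, 16 * ‖ρ p q‖ := by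
        apply Finset.sum_le_sum
        intro p _
        calc ‖star w p * (ρ *ᵥ w) p‖
            = ‖w p‖ * ‖(ρ *ᵥ w) p‖ := by
              rw [norm_mul]; simp [Pi.star_apply]
          _ ≤ 4 * ‖(ρ *ᵥ w) p‖ := by
              exact mul_le_mul_of_nonneg_right (hwb p) (norm_nonneg _)
          _ ≤ 4 * ∑ q : Fin 2 × Fin 2, ‖ρ p q * w q‖ := by
              gcongr
              simp only [Matrix.mulVec, dotProduct]
              exact norm_sum_le _ _
          _ ≤ ∑ q : Fin 2 × Fin 2, 16 * ‖ρ p q‖ := by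
              rw [Finset.mul_sum]
              apply Finset.sum_le_sum
              intro q _
              rw [norm_mul]
              calc 4 * (‖ρ p q‖ * ‖w q‖)
                  ≤ 4 * (‖ρ p q‖ * 4) := by
                    have := hwb q
                    gcongr
                _ = 16 * ‖ρ p q‖ := by ring
lemma ket_quad (σ : Matrix (Fin 2 × Fin 2) (Fin 2 × Fin 2) ℂ) :
    star (ket 2 0 1) ⬝ᵥ (σ *ᵥ ket 2 0 1) = σ (0,1) (0,1) := by
  simp [ket, dotProduct, Matrix.mulVec, Fintype.sum_prod_type, Fin.sum_univ_two]

lemma sigma_entry_le (σ : Matrix (Fin 2 × Fin 2) (Fin 2 × Fin 2) ℂ)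
    (habs : AbsFEF 2 σ) :
    (σ ((0:Fin 2),(1:Fin 2)) ((0:Fin 2),(1:Fin 2))).re ≤ 1/2 := by
  have h := habs uWit uWit_mem
  rw [fef] at h
  have hle := le_ciSup (fef_term_bdd (uWit * σ * uWitᴴ)) (1 : Matrix.unitaryGroup (Fin 2) ℂ)
  have key : (star (psiPlus 2) ⬝ᵥ
      ((((1 : Matrix (Fin 2) (Fin 2) ℂ) ⊗ₖ
          ((1 : Matrix.unitaryGroup (Fin 2) ℂ) : Matrix (Fin 2) (Fin 2) ℂ))ᴴ *
            (uWit * σ * uWitᴴ) *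
        ((1 : Matrix (Fin 2) (Fin 2) ℂ) ⊗ₖ
          ((1 : Matrix.unitaryGroup (Fin 2) ℂ) : Matrix (Fin 2) (Fin 2) ℂ))) *ᵥ psiPlus 2))
      = σ (0,1) (0,1) := by
    rw [show ((1 : Matrix.unitaryGroup (Fin 2) ℂ) : Matrix (Fin 2) (Fin 2) ℂ) = 1 from rfl,
      Matrix.one_kronecker_one, conjTranspose_one, Matrix.mul_one, Matrix.one_mul]
    rw [show uWit * σ * uWitᴴ = (uWitᴴ)ᴴ * σ * uWitᴴ by rw [conjTranspose_conjTranspose]]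
    rw [sandwich, uWit_pull, ket_quad]
  rw [key] at hle
  have h2 : (1 : ℝ) / ((2:ℕ):ℝ) = 1/2 := by norm_num
  calc (σ ((0:Fin 2),(1:Fin 2)) ((0:Fin 2),(1:Fin 2))).re ≤ _ := hle
    _ ≤ 1/2 := by rw [← h2]; exact h
/-- `S₂` has nonnegative expectation on all of `𝔄𝔉₂`, and `Tr(S₂X₂) = q − 1/2`; in
particular for `q < 1/2` one gets `Tr(S₂X₂) < 0`, hence `X₂ ∉ 𝔄𝔉₂`. -/
theorem S₂_witnesses_X₂ (q : ℝ) (hq0 : 0 < q) (hq1 : q ≤ 1) :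
    (∀ σ : Matrix (Fin 2 × Fin 2) (Fin 2 × Fin 2) ℂ,
        IsDensityMatrix σ → AbsFEF 2 σ → 0 ≤ ((S₂ * σ).trace).re) ∧
      ((S₂ * X₂ q).trace).re = q - 1/2 ∧
      (q < 1/2 → ((S₂ * X₂ q).trace).re < 0 ∧ ¬ AbsFEF 2 (X₂ q)) := by
  have part1 : ∀ σ : Matrix (Fin 2 × Fin 2) (Fin 2 × Fin 2) ℂ,
      IsDensityMatrix σ → AbsFEF 2 σ → 0 ≤ ((S₂ * σ).trace).re := by
    intro σ hden habs
    have h2 := sigma_entry_le σ habs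
    rw [trace_S₂_mul, hden.2]
    have h3 : ((1/2 : ℂ) * 1 - σ (0,1) (0,1)).re = 1/2 - (σ (0,1) (0,1)).re := by
      simp
    rw [h3]
    linarith
  have part2 : ((S₂ * X₂ q).trace).re = q - 1/2 := by
    rw [trace_S₂_mul, trace_X₂, X₂_apply_e2]
    simp
    ring
  refine ⟨part1, part2, fun hlt => ⟨by rw [part2]; linarith, ?_⟩⟩
  intro habs
  have hpsd : (X₂ q).PosSemidef := by
    exact Matrix.PosSemidef.add (smul_psd q hq0.le (proj_posSemidef _))
      (smul_psd (1 - q) (by linarith) (proj_posSemidef _))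
  have := part1 (X₂ q) ⟨hpsd, trace_X₂ q⟩ habs
  rw [part2] at this
  linarith
end

section
/- Let d ≥ 2 and, for −1/(d²−1) ≤ β ≤ 1, let X_iso := β|ψ⁺⟩⟨ψ⁺| + ((1−β)/d²)I_{d²} be the isotropic state on ℂ^d ⊗ ℂ^d, where |ψ⁺⟩ = (1/√d)Σᵢ|ii⟩. Then the eigenvalues of X_iso are (β(d²−1)+1)/d² with multiplicity 1 and (1−β)/d² with multiplicity d²−1, and X_iso ∈ 𝔄𝔉_d if and only if β ≤ 1/(d+1). -/
open Matrix Kronecker Complex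
open scoped ComplexOrder

/-- The isotropic state `X_iso = β|ψ⁺⟩⟨ψ⁺| + ((1−β)/d²)I`. -/
noncomputable def isoState (d : ℕ) (β : ℝ) : Matrix (Fin d × Fin d) (Fin d × Fin d) ℂ :=
  (β : ℂ) • proj (psiPlus d) +
    (((1 - β) / (d : ℝ)^2 : ℝ) : ℂ) • (1 : Matrix (Fin d × Fin d) (Fin d × Fin d) ℂ)


lemma psiPlus_dot {d : ℕ} (hd : 0 < d) : star (psiPlus d) ⬝ᵥ psiPlus d = 1 := by
  classical
  have h : ∀ p : Fin d × Fin d, star (psiPlus d p) * psiPlus d p =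
      if p.1 = p.2 then ((d : ℂ))⁻¹ else 0 := by
    intro p
    simp only [psiPlus]
    split_ifs with h
    · rw [Complex.star_def, Complex.conj_ofReal, ← Complex.ofReal_mul]
      rw [← Real.sqrt_inv, Real.mul_self_sqrt (by positivity)]
      push_cast; ring
    · simp
  rw [dotProduct]
  simp only [Pi.star_apply, h]
  rw [Fintype.sum_prod_type]
  simp only [Finset.sum_ite_eq, Finset.mem_univ, if_true, Finset.sum_const,
    Finset.card_univ, Fintype.card_fin, nsmul_eq_mul]
  rw [mul_inv_cancel₀ (by exact_mod_cast hd.ne')]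

lemma psiPlus_ne_zero {d : ℕ} (hd : 0 < d) : psiPlus d ≠ 0 := by
  intro h
  have := psiPlus_dot hd
  rw [h] at this
  simp at this

lemma star_dot {n : Type*} [Fintype n] (v w : n → ℂ) :
    star (star v ⬝ᵥ w) = star w ⬝ᵥ v := by
  simp only [dotProduct, star_sum, Pi.star_apply]
  exact Finset.sum_congr rfl fun j _ => by
    rw [StarMul.star_mul, star_star]

lemma unitary_dot {n : Type*} [Fintype n] [DecidableEq n] {U : Matrix n n ℂ}
    (hU : U ∈ Matrix.unitaryGroup n ℂ) (x y : n → ℂ) :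
    star (U *ᵥ x) ⬝ᵥ (U *ᵥ y) = star x ⬝ᵥ y := by
  rw [Matrix.star_mulVec, Matrix.dotProduct_mulVec, Matrix.vecMul_vecMul,
    ← Matrix.star_eq_conjTranspose, hU.1, Matrix.vecMul_one]

lemma kron_conjT {d : ℕ} (A B : Matrix (Fin d) (Fin d) ℂ) :
    (A ⊗ₖ B)ᴴ = Aᴴ ⊗ₖ Bᴴ := by
  ext ⟨i, j⟩ ⟨k, l⟩
  simp [Matrix.conjTranspose_apply, Matrix.kroneckerMap_apply, mul_comm]

lemma kron_unitary {d : ℕ} {V : Matrix (Fin d) (Fin d) ℂ}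
    (hV : V ∈ Matrix.unitaryGroup (Fin d) ℂ) :
    ((1 : Matrix (Fin d) (Fin d) ℂ) ⊗ₖ V) ∈ Matrix.unitaryGroup (Fin d × Fin d) ℂ := by
  rw [Matrix.mem_unitaryGroup_iff]
  rw [Matrix.star_eq_conjTranspose, kron_conjT, Matrix.conjTranspose_one,
    ← Matrix.mul_kronecker_mul, Matrix.one_mul]
  have : V * Vᴴ = 1 := by
    have := Matrix.mem_unitaryGroup_iff.mp hV
    rwa [Matrix.star_eq_conjTranspose] at this
  rw [this, Matrix.one_kronecker_one]

lemma normSq_dot_le {n : Type*} [Fintype n] (w u : n → ℂ)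
    (hw : star w ⬝ᵥ w = 1) (hu : star u ⬝ᵥ u = 1) :
    Complex.normSq (star w ⬝ᵥ u) ≤ 1 := by
  set w' : EuclideanSpace ℂ n := (WithLp.equiv 2 (n → ℂ)).symm w
  set u' : EuclideanSpace ℂ n := (WithLp.equiv 2 (n → ℂ)).symm u
  have hwu : (inner ℂ w' u' : ℂ) = star w ⬝ᵥ u :=
    (EuclideanSpace.inner_toLp_toLp w u).trans (dotProduct_comm _ _)
  have hww : (inner ℂ w' w' : ℂ) = 1 :=
    ((EuclideanSpace.inner_toLp_toLp w w).trans (dotProduct_comm _ _)).trans hw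
  have huu : (inner ℂ u' u' : ℂ) = 1 :=
    ((EuclideanSpace.inner_toLp_toLp u u).trans (dotProduct_comm _ _)).trans hu
  have hnw : ‖w'‖ ^ 2 = 1 := by
    have := inner_self_eq_norm_sq (𝕜 := ℂ) w'
    rw [hww] at this; simpa using this.symm
  have hnu : ‖u'‖ ^ 2 = 1 := by
    have := inner_self_eq_norm_sq (𝕜 := ℂ) u'
    rw [huu] at this; simpa using this.symm
  have h := norm_inner_le_norm (𝕜 := ℂ) w' u'
  rw [hwu] at h
  have : Complex.normSq (star w ⬝ᵥ u) = ‖star w ⬝ᵥ u‖ ^ 2 := by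
    rw [← Complex.sq_norm]
  rw [this]
  nlinarith [norm_nonneg (star w ⬝ᵥ u), norm_nonneg w', norm_nonneg u']

lemma iso_value {d : ℕ} (hd : 0 < d) (β : ℝ)
    {U : Matrix (Fin d × Fin d) (Fin d × Fin d) ℂ}
    (hU : U ∈ Matrix.unitaryGroup (Fin d × Fin d) ℂ)
    {V : Matrix (Fin d) (Fin d) ℂ} (hV : V ∈ Matrix.unitaryGroup (Fin d) ℂ) :
    (star (psiPlus d) ⬝ᵥ
      ((((1 : Matrix (Fin d) (Fin d) ℂ) ⊗ₖ V)ᴴ * (U * isoState d β * Uᴴ) *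
        ((1 : Matrix (Fin d) (Fin d) ℂ) ⊗ₖ V)) *ᵥ psiPlus d)).re =
    β * Complex.normSq (star (((1 : Matrix (Fin d) (Fin d) ℂ) ⊗ₖ V) *ᵥ psiPlus d) ⬝ᵥ (U *ᵥ psiPlus d))
      + (1 - β) / (d : ℝ)^2 := by
  classical
  set ψ := psiPlus d
  set A := (1 : Matrix (Fin d) (Fin d) ℂ) ⊗ₖ V with hA
  set w := A *ᵥ ψ with hw
  set u := U *ᵥ ψ with hu
  set t := star w ⬝ᵥ u with ht
  have hAmem : A ∈ Matrix.unitaryGroup (Fin d × Fin d) ℂ := kron_unitary hV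
  -- star ψ ⬝ᵥ (Aᴴ * M * A) *ᵥ ψ = star w ⬝ᵥ M *ᵥ w
  have step1 : ∀ M : Matrix (Fin d × Fin d) (Fin d × Fin d) ℂ,
      star ψ ⬝ᵥ ((Aᴴ * M * A) *ᵥ ψ) = star w ⬝ᵥ (M *ᵥ w) := by
    intro M
    rw [← Matrix.mulVec_mulVec, ← Matrix.mulVec_mulVec, Matrix.dotProduct_mulVec,
      hw, Matrix.star_mulVec, Matrix.dotProduct_mulVec]
  rw [step1]
  -- expand isoState
  have huu : U * Uᴴ = 1 := by
    have := Matrix.mem_unitaryGroup_iff.mp hU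
    rwa [Matrix.star_eq_conjTranspose] at this
  have hUH : Uᴴ * U = 1 := by
    have := hU.1
    rwa [Matrix.star_eq_conjTranspose] at this
  have expand : (U * isoState d β * Uᴴ) *ᵥ w
      = ((β : ℂ) * (star u ⬝ᵥ w)) • u + (((1 - β) / (d : ℝ)^2 : ℝ) : ℂ) • w := by
    simp only [isoState]
    rw [Matrix.mul_add, Matrix.add_mul, Matrix.add_mulVec]
    congr 1
    · rw [Matrix.mul_smul, Matrix.smul_mul, Matrix.smul_mulVec]
      rw [← Matrix.mulVec_mulVec, ← Matrix.mulVec_mulVec]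
      rw [proj_mulVec]
      have : star ψ ⬝ᵥ (Uᴴ *ᵥ w) = star u ⬝ᵥ w := by
        rw [hu, Matrix.star_mulVec, Matrix.dotProduct_mulVec]
      rw [Matrix.mulVec_smul, this, smul_smul, ← hu]
    · rw [Matrix.mul_smul, Matrix.smul_mul, Matrix.mul_one, huu, Matrix.smul_mulVec,
        Matrix.one_mulVec]
  rw [expand, dotProduct_add, dotProduct_smul, dotProduct_smul]
  have hww : star w ⬝ᵥ w = 1 := by rw [hw]; rw [unitary_dot hAmem]; exact psiPlus_dot hd
  have hsu : star u ⬝ᵥ w = star t := (star_dot w u).symm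
  rw [hww, hsu, ← ht, smul_eq_mul, smul_eq_mul, mul_one, mul_assoc]
  have : star t * t = (Complex.normSq t : ℂ) := by
    rw [Complex.star_def, Complex.normSq_eq_conj_mul_self]
  rw [this, ← Complex.ofReal_mul, ← Complex.ofReal_add, Complex.ofReal_re]

lemma eigen_part (d : ℕ) (hd : 2 ≤ d) (β : ℝ) (hH : (isoState d β).IsHermitian) :
    ∃ i₀, hH.eigenvalues i₀ = (β * ((d : ℝ)^2 - 1) + 1) / (d : ℝ)^2 ∧
      ∀ i ≠ i₀, hH.eigenvalues i = (1 - β) / (d : ℝ)^2 := by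
  classical
  have hd0 : 0 < d := lt_of_lt_of_le two_pos hd
  have hdR : (0 : ℝ) < (d : ℝ) := by exact_mod_cast hd0
  set ψ := psiPlus d with hψdef
  set c : ℝ := (1 - β) / (d : ℝ)^2 with hc
  set μ := hH.eigenvalues with hμ
  set b := hH.eigenvectorBasis with hb
  set v : (Fin d × Fin d) → (Fin d × Fin d) → ℂ := fun i => ⇑(b i) with hv
  set t : (Fin d × Fin d) → ℂ := fun i => star ψ ⬝ᵥ v i with htdef
  have horth : ∀ i j, star (v i) ⬝ᵥ v j = if i = j then 1 else 0 := by
    intro i j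
    have h1 := orthonormal_iff_ite.mp b.orthonormal i j
    have h2 : (inner ℂ (b i) (b j) : ℂ) = star (v i) ⬝ᵥ v j := by
      rw [EuclideanSpace.inner_eq_star_dotProduct]; exact dotProduct_comm _ _
    rw [h2] at h1
    simpa using h1
  have hvne : ∀ i, v i ≠ 0 := by
    intro i h
    have := horth i i
    rw [h] at this
    simp at this
  have key : ∀ i, ((β : ℂ) * t i) • ψ = ((μ i - c : ℝ) : ℂ) • v i := by
    intro i
    have h0 := hH.mulVec_eigenvectorBasis i
    simp only [isoState] at h0
    rw [Matrix.add_mulVec, Matrix.smul_mulVec, Matrix.smul_mulVec,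
      Matrix.one_mulVec, proj_mulVec] at h0
    have hsm : (μ i) • (v i) = ((μ i : ℝ) : ℂ) • v i := by
      ext p; simp [Complex.real_smul]
    have h0' : (β : ℂ) • (t i • ψ) + ((c : ℝ) : ℂ) • v i = ((μ i : ℝ) : ℂ) • v i := by
      rw [← hsm]; exact h0
    have : (β : ℂ) • (t i • ψ) = ((μ i : ℝ) : ℂ) • v i - ((c : ℝ) : ℂ) • v i := by
      rw [← h0']; abel
    rw [smul_smul] at this
    rw [this, ← sub_smul, ← Complex.ofReal_sub]
  have hψ1 : star ψ ⬝ᵥ ψ = 1 := psiPlus_dot hd0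
  have hψne : ψ ≠ 0 := psiPlus_ne_zero hd0
  -- case β = 0
  by_cases hβ0 : β = 0
  · refine ⟨(⟨0, hd0⟩, ⟨0, hd0⟩), ?_, ?_⟩
    · have hk := key (⟨0, hd0⟩, ⟨0, hd0⟩)
      rw [hβ0] at hk
      simp only [Complex.ofReal_zero, zero_mul, zero_smul] at hk
      have := (smul_eq_zero.mp hk.symm).resolve_right (hvne _)
      have hμc : μ (⟨0, hd0⟩, ⟨0, hd0⟩) = c := by
        have := Complex.ofReal_eq_zero.mp this
        linarith
      rw [hμc, hc, hβ0]; ring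
    · intro i _
      have hk := key i
      rw [hβ0] at hk
      simp only [Complex.ofReal_zero, zero_mul, zero_smul] at hk
      have := (smul_eq_zero.mp hk.symm).resolve_right (hvne _)
      have hμc : μ i = c := by
        have := Complex.ofReal_eq_zero.mp this
        linarith
      rw [hμc]
  -- case β ≠ 0
  · have claim1 : ∀ i, t i ≠ 0 → μ i = β + c ∧ v i = t i • ψ := by
      intro i hti
      have hk := key i
      have hm : ((μ i - c : ℝ) : ℂ) ≠ 0 := by
        intro h
        rw [h, zero_smul] at hk
        rcases smul_eq_zero.mp hk with h' | h'
        · exact (mul_ne_zero (Complex.ofReal_ne_zero.mpr hβ0) hti) h'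
        · exact hψne h'
      have hvi : v i = (((β : ℂ) * t i) / ((μ i - c : ℝ) : ℂ)) • ψ := by
        rw [div_eq_mul_inv, mul_comm, ← smul_smul]
        rw [hk, smul_smul, inv_mul_cancel₀ hm, one_smul]
      have hti2 : t i = ((β : ℂ) * t i) / ((μ i - c : ℝ) : ℂ) := by
        have hdot : star ψ ⬝ᵥ v i = ((β : ℂ) * t i) / ((μ i - c : ℝ) : ℂ) := by
          rw [hvi, dotProduct_smul, hψ1, smul_eq_mul, mul_one]
        exact hdot
      have hmb : ((μ i - c : ℝ) : ℂ) = (β : ℂ) := by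
        have h5 : t i * ((μ i - c : ℝ) : ℂ) = (β : ℂ) * t i := by
          conv_lhs => rw [hti2]
          exact div_mul_cancel₀ _ hm
        rw [mul_comm] at h5
        exact mul_right_cancel₀ hti h5
      have hμi : μ i = β + c := by
        have := Complex.ofReal_injective hmb
        linarith
      refine ⟨hμi, ?_⟩
      rw [hvi, hmb, mul_comm, mul_div_assoc, div_self (Complex.ofReal_ne_zero.mpr hβ0), mul_one]
    have claim2 : ∀ i, t i = 0 → μ i = c := by
      intro i hti
      have hk := key i
      rw [hti, mul_zero, zero_smul] at hk
      have := (smul_eq_zero.mp hk.symm).resolve_right (hvne _)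
      have := Complex.ofReal_eq_zero.mp this
      linarith
    have hex : ∃ i, t i ≠ 0 := by
      by_contra h
      push_neg at h
      have hψ0 : ψ = 0 := by
        set ψ' : EuclideanSpace ℂ (Fin d × Fin d) := (WithLp.equiv 2 _).symm ψ with hψ'
        have hrepr : ∀ i, (b.repr ψ') i = 0 := by
          intro i
          rw [OrthonormalBasis.repr_apply_apply]
          have h2 : (inner ℂ (b i) ψ' : ℂ) = star (v i) ⬝ᵥ ψ := by
              rw [EuclideanSpace.inner_eq_star_dotProduct]; exact dotProduct_comm _ _
          rw [h2, ← star_dot, show star ψ ⬝ᵥ v i = t i from rfl, h i, star_zero]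
        have : b.repr ψ' = 0 := by
          ext i; exact hrepr i
        have : ψ' = 0 := by
          have h0 := b.repr.injective (a₁ := ψ') (a₂ := 0)
          apply h0
          rw [this, map_zero]
        exact congrArg (WithLp.equiv 2 _) this
      exact hψne hψ0
    obtain ⟨i₀, hi₀⟩ := hex
    refine ⟨i₀, ?_, ?_⟩
    · have := (claim1 i₀ hi₀).1
      rw [this, hc]
      field_simp
      ring
    · intro i hne
      by_cases hti : t i = 0
      · exact claim2 i hti
      · exfalso
        have h1 := (claim1 i hti).2
        have h2 := (claim1 i₀ hi₀).2
        have horth' := horth i i₀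
        rw [if_neg hne, h1, h2] at horth'
        rw [star_smul, smul_dotProduct, dotProduct_smul, hψ1] at horth'
        simp only [smul_eq_mul, mul_one] at horth'
        rcases mul_eq_zero.mp horth' with h | h
        · exact hti (by simpa using h)
        · exact hi₀ h
lemma keyiff (D β : ℝ) (hD0 : 0 < D) : (β + (1-β)/D^2 ≤ 1/D) ↔ β*(D^2 - 1) ≤ D - 1 := by
  have he : β + (1-β)/D^2 = (β*D^2 + (1-β))/D^2 := by field_simp
  rw [he, div_le_div_iff₀ (by positivity) hD0]
  constructor <;> intro h <;> nlinarith

lemma ar1 (D β : ℝ) (hD : 2 ≤ D) (h : β + (1-β)/D^2 ≤ 1/D) : β ≤ 1/(D+1) := by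
  have hD0 : (0:ℝ) < D := by linarith
  rw [le_div_iff₀ (by linarith : (0:ℝ) < D + 1)]
  have h' := (keyiff D β hD0).mp h
  nlinarith

lemma ar2 (D β s : ℝ) (hD : 2 ≤ D) (hβ : β ≤ 1/(D+1)) (hβ0 : 0 ≤ β) (hs0 : 0 ≤ s) (hs1 : s ≤ 1) :
    β * s + (1-β)/D^2 ≤ 1/D := by
  have hD0 : (0:ℝ) < D := by linarith
  have h1 : β * s ≤ β := by nlinarith
  have h3 : β * (D+1) ≤ 1 := by rw [le_div_iff₀ (by linarith)] at hβ; exact hβ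
  have h2 : β + (1-β)/D^2 ≤ 1/D := (keyiff D β hD0).mpr (by nlinarith)
  linarith

lemma ar3 (D β s : ℝ) (hD : 2 ≤ D) (hβl : -(1/(D^2-1)) ≤ β) (hβ0 : β < 0) (hs0 : 0 ≤ s) :
    β * s + (1-β)/D^2 ≤ 1/D := by
  have hD0 : (0:ℝ) < D := by linarith
  have h1 : β * s ≤ 0 := mul_nonpos_of_nonpos_of_nonneg (le_of_lt hβ0) hs0
  have hB : 1 - D ≤ β := by
    have hpos : (0:ℝ) < D^2 - 1 := by nlinarith
    have : 1/(D^2-1) ≤ D - 1 := by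
      rw [div_le_iff₀ hpos]; nlinarith
    linarith
  have h2 : (1-β)/D^2 ≤ 1/D := by
    rw [div_le_div_iff₀ (by positivity) hD0]
    nlinarith
  linarith


/-- The isotropic state has eigenvalue `(β(d²−1)+1)/d²` with multiplicity one and
`(1−β)/d²` with multiplicity `d²−1`, and belongs to `𝔄𝔉_d` iff `β ≤ 1/(d+1)`. -/
theorem isoState_absFEF_iff (d : ℕ) (hd : 2 ≤ d) (β : ℝ)
    (hβl : -(1 / ((d : ℝ)^2 - 1)) ≤ β) (hβu : β ≤ 1)
    (hH : (isoState d β).IsHermitian) :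
    (∃ i₀, hH.eigenvalues i₀ = (β * ((d : ℝ)^2 - 1) + 1) / (d : ℝ)^2 ∧
        ∀ i ≠ i₀, hH.eigenvalues i = (1 - β) / (d : ℝ)^2) ∧
      (AbsFEF d (isoState d β) ↔ β ≤ 1 / ((d : ℝ) + 1)) := by
  have hd0 : 0 < d := lt_of_lt_of_le two_pos hd
  have hD : (2 : ℝ) ≤ (d : ℝ) := by exact_mod_cast hd
  have hD0 : (0 : ℝ) < (d : ℝ) := by linarith
  refine ⟨eigen_part d hd β hH, ?_⟩
  haveI : Nonempty (Matrix.unitaryGroup (Fin d) ℂ) := ⟨1⟩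
  set ψ := psiPlus d with hψdef
  set c : ℝ := (1 - β) / (d : ℝ)^2 with hc
  -- each term of the sup equals β * s + c with s ∈ [0,1]
  have hterm : ∀ (U : Matrix (Fin d × Fin d) (Fin d × Fin d) ℂ),
      U ∈ Matrix.unitaryGroup (Fin d × Fin d) ℂ →
      ∀ V : Matrix.unitaryGroup (Fin d) ℂ,
      ∃ s : ℝ, 0 ≤ s ∧ s ≤ 1 ∧
        (star ψ ⬝ᵥ
          ((((1 : Matrix (Fin d) (Fin d) ℂ) ⊗ₖ (V : Matrix (Fin d) (Fin d) ℂ))ᴴ *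
            (U * isoState d β * Uᴴ) *
            ((1 : Matrix (Fin d) (Fin d) ℂ) ⊗ₖ (V : Matrix (Fin d) (Fin d) ℂ))) *ᵥ ψ)).re
          = β * s + c := by
    intro U hU V
    refine ⟨Complex.normSq
      (star (((1 : Matrix (Fin d) (Fin d) ℂ) ⊗ₖ (V : Matrix (Fin d) (Fin d) ℂ)) *ᵥ ψ) ⬝ᵥ
        (U *ᵥ ψ)), Complex.normSq_nonneg _, ?_, iso_value hd0 β hU V.2⟩
    apply normSq_dot_le
    · rw [unitary_dot (kron_unitary V.2)]; exact psiPlus_dot hd0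
    · rw [unitary_dot hU]; exact psiPlus_dot hd0
  have hbdd : ∀ (U : Matrix (Fin d × Fin d) (Fin d × Fin d) ℂ),
      U ∈ Matrix.unitaryGroup (Fin d × Fin d) ℂ →
      BddAbove (Set.range fun V : Matrix.unitaryGroup (Fin d) ℂ =>
        (star ψ ⬝ᵥ
          ((((1 : Matrix (Fin d) (Fin d) ℂ) ⊗ₖ (V : Matrix (Fin d) (Fin d) ℂ))ᴴ *
            (U * isoState d β * Uᴴ) *
            ((1 : Matrix (Fin d) (Fin d) ℂ) ⊗ₖ (V : Matrix (Fin d) (Fin d) ℂ))) *ᵥ ψ)).re) := by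
    intro U hU
    refine ⟨|β| + c, ?_⟩
    rintro x ⟨V, rfl⟩
    dsimp only
    obtain ⟨s, hs0, hs1, he⟩ := hterm U hU V
    rw [he]
    have : β * s ≤ |β| := by
      calc β * s ≤ |β * s| := le_abs_self _
      _ = |β| * |s| := abs_mul β s
      _ ≤ |β| * 1 := by
          apply mul_le_mul_of_nonneg_left _ (abs_nonneg β)
          rw [_root_.abs_of_nonneg hs0]; exact hs1
      _ = |β| := mul_one _
    linarith
  constructor
  · -- AbsFEF → β ≤ 1/(d+1)
    intro h
    have h1 := h 1 (one_mem _)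
    have hle : β + c ≤ fef d ((1 : Matrix (Fin d × Fin d) (Fin d × Fin d) ℂ) * isoState d β * (1 : Matrix (Fin d × Fin d) (Fin d × Fin d) ℂ)ᴴ) := by
      have := le_ciSup (hbdd 1 (one_mem _)) (1 : Matrix.unitaryGroup (Fin d) ℂ)
      rw [show ((1 : Matrix.unitaryGroup (Fin d) ℂ) : Matrix (Fin d) (Fin d) ℂ) = 1 from rfl] at this
      refine le_trans (le_of_eq ?_) this
      rw [iso_value hd0 β (one_mem _) (one_mem _)]
      rw [Matrix.one_kronecker_one, Matrix.one_mulVec, psiPlus_dot hd0,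
        Complex.normSq_one, hc]
      ring
    have : β + c ≤ 1 / (d : ℝ) := le_trans hle h1
    exact ar1 (d : ℝ) β hD (by rw [hc] at this; exact this)
  · -- β ≤ 1/(d+1) → AbsFEF
    intro hβ U hU
    apply ciSup_le
    intro V
    obtain ⟨s, hs0, hs1, he⟩ := hterm U hU V
    rw [he]
    rcases le_or_gt 0 β with hβ0 | hβ0
    · exact ar2 (d : ℝ) β s hD hβ hβ0 hs0 hs1
    · exact ar3 (d : ℝ) β s hD hβl hβ0 hs0
end
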